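/- For every t ∈ [0, T], the integrals of the absolute values of the entries of the Green's matrix are independent of t and equal: ∫₀ᵀ |G_{1,1}(t,s)| ds = ∫₀ᵀ |G_{2,2}(t,s)| ds = (1/(ω |sin(ωT/2)|)) ∫₀^{ωT/2} |sin u| du, ∫₀ᵀ |G_{1,2}(t,s)| ds = (σ/(4ω² |sin(ωT/2)|)) ∫₀^{ωT/2} |cos u| du, and ∫₀ᵀ |G_{2,1}(t,s)| ds = (4/(σ |sin(ωT/2)|)) ∫₀^{ωT/2} |cos u| du. -/

import Mathlib

/-- The matrix A with rows (0, −σ/4) and (μ²/σ, 0). -/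
noncomputable def planktonA (μ σ : ℝ) : Matrix (Fin 2) (Fin 2) ℝ :=
  !![0, -σ / 4; μ ^ 2 / σ, 0]

/-- J = I₂ − exp(TA). -/
noncomputable def planktonJ (μ σ T : ℝ) : Matrix (Fin 2) (Fin 2) ℝ :=
  1 - NormedSpace.exp (T • planktonA μ σ)

/-- The Green's matrix: G(t,s) = J⁻¹ exp((t − s)A) for s ≤ t, and
G(t,s) = J⁻¹ exp(TA) exp((t − s)A) for t < s. -/
noncomputable def planktonG (μ σ T : ℝ) (t s : ℝ) : Matrix (Fin 2) (Fin 2) ℝ :=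
  if s ≤ t then (planktonJ μ σ T)⁻¹ * NormedSpace.exp ((t - s) • planktonA μ σ)
  else (planktonJ μ σ T)⁻¹ * NormedSpace.exp (T • planktonA μ σ) *
    NormedSpace.exp ((t - s) • planktonA μ σ)


attribute [local instance] Matrix.linftyOpNormedRing Matrix.linftyOpNormedAlgebra

lemma planktonA_sq (μ σ : ℝ) (hσ : σ ≠ 0) :
    planktonA μ σ * planktonA μ σ = (-(μ/2)^2) • (1 : Matrix (Fin 2) (Fin 2) ℝ) := by
  ext i j
  fin_cases i <;> fin_cases j <;>
    · simp [planktonA, Matrix.mul_apply, Fin.sum_univ_two, Matrix.one_apply]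
      try field_simp
      try ring

lemma exp_planktonA (μ σ : ℝ) (hμ : μ ≠ 0) (hσ : σ ≠ 0) (x : ℝ) :
    NormedSpace.exp (x • planktonA μ σ) =
      Real.cos (μ/2 * x) • (1 : Matrix (Fin 2) (Fin 2) ℝ) +
      (Real.sin (μ/2 * x) / (μ/2)) • planktonA μ σ := by
  set ω : ℝ := μ/2 with hωdef
  have hω : ω ≠ 0 := by simpa [hωdef] using hμ
  set P : Matrix (Fin 2) (Fin 2) ℝ := ω⁻¹ • planktonA μ σ with hPdef
  have hP : P * P = -1 := by
    rw [hPdef, smul_mul_smul_comm, planktonA_sq μ σ hσ, smul_smul]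
    rw [show (ω⁻¹ * ω⁻¹) * (-(μ/2)^2) = -1 by field_simp [hωdef]; ring]
    simp
  set φ : ℂ →ₐ[ℝ] Matrix (Fin 2) (Fin 2) ℝ := Complex.liftAux P hP with hφdef
  have hφ : ∀ z : ℂ, φ z = z.re • (1 : Matrix (Fin 2) (Fin 2) ℝ) + z.im • P := by
    intro z
    rw [hφdef, Complex.liftAux_apply, Algebra.algebraMap_eq_smul_one]
  have hcont : Continuous φ := by
    have : (φ : ℂ → Matrix (Fin 2) (Fin 2) ℝ)
        = fun z => z.re • (1 : Matrix (Fin 2) (Fin 2) ℝ) + z.im • P := funext hφ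
    rw [this]
    exact (Complex.continuous_re.smul continuous_const).add
      (Complex.continuous_im.smul continuous_const)
  have key := NormedSpace.map_exp φ hcont (((ω * x : ℝ) : ℂ) * Complex.I)
  have h1 : φ (((ω * x : ℝ) : ℂ) * Complex.I) = x • planktonA μ σ := by
    rw [hφ]
    simp [hPdef, smul_smul]
    rw [show ω * x * ω⁻¹ = x by field_simp]
  have h2 : NormedSpace.exp (((ω * x : ℝ) : ℂ) * Complex.I)
      = Complex.exp (((ω * x : ℝ) : ℂ) * Complex.I) := by
    rw [Complex.exp_eq_exp_ℂ]
  rw [h1] at key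
  rw [show NormedSpace.exp (x • planktonA μ σ) = _ from key.symm, h2, Complex.exp_mul_I, hφ]
  simp [hPdef, smul_smul, ← Complex.ofReal_mul, Complex.cos_ofReal_im, Complex.sin_ofReal_im,
    Complex.cos_ofReal_re, Complex.sin_ofReal_re, div_eq_mul_inv]

lemma exp_planktonA' (μ σ : ℝ) (hμ : μ ≠ 0) (hσ : σ ≠ 0) (x : ℝ) :
    NormedSpace.exp (x • planktonA μ σ) =
      !![Real.cos (μ/2 * x), -(σ/(4*(μ/2))) * Real.sin (μ/2 * x);
         (4*(μ/2)/σ) * Real.sin (μ/2 * x), Real.cos (μ/2 * x)] := by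
  rw [exp_planktonA μ σ hμ hσ]
  ext i j
  fin_cases i <;> fin_cases j <;>
    · simp [planktonA, Matrix.one_apply]
      try field_simp
      try ring

lemma KE (ω σ c T : ℝ) (hω : ω ≠ 0) (hσ : σ ≠ 0) (hsin : Real.sin c ≠ 0) (hT : ω * T = 2*c) (y : ℝ) :
    ((4 * Real.sin c ^ 2)⁻¹ • ((1 : Matrix (Fin 2) (Fin 2) ℝ) -
        !![Real.cos (ω * (-T)), -(σ/(4*ω)) * Real.sin (ω*(-T));
           (4*ω/σ) * Real.sin (ω*(-T)), Real.cos (ω*(-T))])) *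
     !![Real.cos (ω*y), -(σ/(4*ω)) * Real.sin (ω*y); (4*ω/σ) * Real.sin (ω*y), Real.cos (ω*y)]
    = (2 * Real.sin c)⁻¹ • !![Real.sin (c - ω*y), -(σ/(4*ω)) * Real.cos (c - ω*y);
        (4*ω/σ) * Real.cos (c - ω*y), Real.sin (c - ω*y)] := by
  have h2 : ω * (-T) = -(2*c) := by rw [mul_neg, hT]
  rw [h2, Real.cos_neg, Real.sin_neg]
  ext i j; fin_cases i <;> fin_cases j <;>
    · simp [Matrix.mul_apply, Fin.sum_univ_two, Matrix.one_apply]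
      rw [Real.cos_two_mul, Real.sin_two_mul]
      try rw [Real.sin_sub]
      try rw [Real.cos_sub]
      field_simp
      first
      | linear_combination (-64 * ω * Real.sin c ^ 3 * σ * Real.cos (ω*y)) * Real.sin_sq_add_cos_sq c
      | linear_combination (256 * σ * ω^2 * Real.sin c ^ 3 * Real.sin (ω*y)) * Real.sin_sq_add_cos_sq c
      | linear_combination (-16 * ω * Real.sin c * Real.sin (ω*y) * σ) * Real.sin_sq_add_cos_sq c
      | linear_combination (-4 * Real.cos (ω*y)) * Real.sin_sq_add_cos_sq c
      | linear_combination (4 * Real.sin (ω*y)) * Real.sin_sq_add_cos_sq c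
      | linear_combination (-4 * Real.sin (ω*y)) * Real.sin_sq_add_cos_sq c

lemma planktonJ_inv (μ σ T : ℝ) (hμ : μ ≠ 0) (hσ : σ ≠ 0)
    (hsin : Real.sin (μ/2 * T / 2) ≠ 0) :
    (planktonJ μ σ T)⁻¹ = (4 * Real.sin (μ/2 * T / 2) ^ 2)⁻¹ •
      ((1 : Matrix (Fin 2) (Fin 2) ℝ) - NormedSpace.exp ((-T) • planktonA μ σ)) := by
  apply Matrix.inv_eq_right_inv
  rw [planktonJ, exp_planktonA' μ σ hμ hσ, exp_planktonA' μ σ hμ hσ]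
  set c : ℝ := μ/2 * T / 2 with hc
  have h2 : μ/2 * T = 2*c := by rw [hc]; ring
  have h2' : μ/2 * (-T) = -(2*c) := by rw [mul_neg, h2]
  rw [h2, h2', Real.cos_neg, Real.sin_neg]
  ext i j; fin_cases i <;> fin_cases j <;>
    · simp [Matrix.mul_apply, Fin.sum_univ_two, Matrix.one_apply]
      rw [Real.cos_two_mul, Real.sin_two_mul]
      field_simp
      first
      | linear_combination 0 * Real.sin_sq_add_cos_sq c
      | linear_combination (128 * μ * σ * Real.sin c ^ 2 * (Real.cos c ^ 2 - 1)) * Real.sin_sq_add_cos_sq c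
      | linear_combination (4 * (Real.cos c ^ 2 - 1)) * Real.sin_sq_add_cos_sq c

lemma planktonG_eq_le (μ σ T : ℝ) (hμ : μ ≠ 0) (hσ : σ ≠ 0)
    (hsin : Real.sin (μ/2 * T / 2) ≠ 0) {t s : ℝ} (h : s ≤ t) :
    planktonG μ σ T t s = (2 * Real.sin (μ/2 * T / 2))⁻¹ •
      !![Real.sin (μ/2*T/2 - μ/2*(t-s)), -(σ/(4*(μ/2))) * Real.cos (μ/2*T/2 - μ/2*(t-s));
         (4*(μ/2)/σ) * Real.cos (μ/2*T/2 - μ/2*(t-s)), Real.sin (μ/2*T/2 - μ/2*(t-s))] := by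
  rw [planktonG, if_pos h, planktonJ_inv μ σ T hμ hσ hsin, exp_planktonA' μ σ hμ hσ,
    exp_planktonA' μ σ hμ hσ]
  exact KE (μ/2) σ (μ/2*T/2) T (by simpa using hμ) hσ hsin (by ring) (t - s)

lemma planktonG_eq_gt (μ σ T : ℝ) (hμ : μ ≠ 0) (hσ : σ ≠ 0)
    (hsin : Real.sin (μ/2 * T / 2) ≠ 0) {t s : ℝ} (h : ¬ s ≤ t) :
    planktonG μ σ T t s = (2 * Real.sin (μ/2 * T / 2))⁻¹ •
      !![Real.sin (μ/2*T/2 - μ/2*(T+(t-s))),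
         -(σ/(4*(μ/2))) * Real.cos (μ/2*T/2 - μ/2*(T+(t-s)));
         (4*(μ/2)/σ) * Real.cos (μ/2*T/2 - μ/2*(T+(t-s))),
         Real.sin (μ/2*T/2 - μ/2*(T+(t-s)))] := by
  have hcomm : Commute (T • planktonA μ σ) ((t-s) • planktonA μ σ) :=
    ((Commute.refl _).smul_left T).smul_right (t-s)
  rw [planktonG, if_neg h, planktonJ_inv μ σ T hμ hσ hsin, mul_assoc,
    ← Matrix.exp_add_of_commute _ _ hcomm, ← add_smul,
    exp_planktonA' μ σ hμ hσ, exp_planktonA' μ σ hμ hσ]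
  exact KE (μ/2) σ (μ/2*T/2) T (by simpa using hμ) hσ hsin (by ring) (T + (t-s))

open intervalIntegral in
lemma master (ω T t : ℝ) (hω : 0 < ω) (ht0 : 0 ≤ t) (htT : t ≤ T)
    (f F : ℝ → ℝ) (hf : Continuous f) (hev : ∀ x, f (-x) = f x)
    (hF1 : ∀ s ∈ Set.Ioc (0:ℝ) t, F s = f (ω*s + (ω*T/2 - ω*t)))
    (hF2 : ∀ s ∈ Set.Ioc t T, F s = f (-ω*s + (ω*t + ω*T/2))) :
    ∫ s in (0:ℝ)..T, F s = (2/ω) * ∫ u in (0:ℝ)..(ω*T/2), f u := by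
  set c : ℝ := ω*T/2 with hc
  have hg1 : Continuous fun s => f (ω*s + (c - ω*t)) := by fun_prop
  have hg2 : Continuous fun s => f (-ω*s + (ω*t + c)) := by fun_prop
  have hI1 : IntervalIntegrable F MeasureTheory.volume 0 t := by
    rw [intervalIntegrable_iff_integrableOn_Ioc_of_le ht0]
    exact (hg1.integrableOn_Ioc).congr_fun (fun s hs => (hF1 s hs).symm) measurableSet_Ioc
  have hI2 : IntervalIntegrable F MeasureTheory.volume t T := by
    rw [intervalIntegrable_iff_integrableOn_Ioc_of_le htT]
    exact (hg2.integrableOn_Ioc).congr_fun (fun s hs => (hF2 s hs).symm) measurableSet_Ioc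
  rw [← integral_add_adjacent_intervals hI1 hI2]
  have e1 : ∫ s in (0:ℝ)..t, F s = ∫ s in (0:ℝ)..t, f (ω*s + (c - ω*t)) := by
    rw [integral_of_le ht0, integral_of_le ht0]
    exact MeasureTheory.setIntegral_congr_fun measurableSet_Ioc hF1
  have e2 : ∫ s in t..T, F s = ∫ s in t..T, f (-ω*s + (ω*t + c)) := by
    rw [integral_of_le htT, integral_of_le htT]
    exact MeasureTheory.setIntegral_congr_fun measurableSet_Ioc hF2
  rw [e1, e2, integral_comp_mul_add f hω.ne' (c - ω*t),
    integral_comp_mul_add f (neg_ne_zero.mpr hω.ne') (ω*t + c)]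
  rw [show ω*0 + (c - ω*t) = c - ω*t by ring, show ω*t + (c - ω*t) = c by ring,
    show -ω*t + (ω*t + c) = c by ring, show -ω*T + (ω*t + c) = ω*t - c by rw [hc]; ring]
  have h6 : ∫ x in (ω*t - c)..c, f x = ∫ x in (-c)..(c - ω*t), f x := by
    have h6a : ∫ x in (ω*t - c)..c, f x = ∫ x in (ω*t - c)..c, f (-x) := by
      simp only [hev]
    rw [h6a, integral_comp_neg, show -(ω*t - c) = c - ω*t by ring]
  have h7 : (∫ x in (-c)..(c - ω*t), f x) + ∫ x in (c - ω*t)..c, f x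
      = ∫ x in (-c)..c, f x :=
    integral_add_adjacent_intervals (hf.intervalIntegrable _ _) (hf.intervalIntegrable _ _)
  have h8 : ∫ x in (-c)..(0:ℝ), f x = ∫ x in (0:ℝ)..c, f x := by
    have : ∫ x in (-c)..(0:ℝ), f x = ∫ x in (-c)..(0:ℝ), f (-x) := by simp only [hev]
    rw [this, integral_comp_neg, neg_zero, neg_neg]
  have h9 : (∫ x in (-c)..(0:ℝ), f x) + ∫ x in (0:ℝ)..c, f x = ∫ x in (-c)..c, f x :=
    integral_add_adjacent_intervals (hf.intervalIntegrable _ _) (hf.intervalIntegrable _ _)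
  have h5 : ∫ x in c..(ω*t - c), f x = - ∫ x in (ω*t - c)..c, f x :=
    integral_symm _ _
  rw [smul_eq_mul, smul_eq_mul, h5, h6]
  have : (∫ x in (-c)..(c - ω*t), f x) + ∫ x in (c - ω*t)..c, f x
      = 2 * ∫ x in (0:ℝ)..c, f x := by rw [h7, ← h9, h8]; ring
  field_simp
  linarith [this]

lemma const_aux1 (b d e : ℝ) (hb : b ≠ 0) (hd : d ≠ 0) (he : e ≠ 0) :
    2*e * (4*b/d) * (d/(4*b^2*e)) = 2/b := by
  field_simp

lemma const_aux2 (b d e : ℝ) (hb : b ≠ 0) (hd : d ≠ 0) (he : e ≠ 0) :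
    2*e * (d/(4*b)) * (4/(d*e)) = 2/b := by
  field_simp

lemma cancel_aux (A k k' X : ℝ) (hA : A ≠ 0) (hk : k * k' = 1) :
    A * (k * (A⁻¹ * (k' * X))) = X := by
  have h : A * (k * (A⁻¹ * (k' * X))) = (A * A⁻¹) * ((k * k') * X) := by ring
  rw [h, mul_inv_cancel₀ hA, hk, one_mul, one_mul]

lemma absG_le (μ σ T : ℝ) (hμ : 0 < μ) (hσ : 0 < σ)
    (hsin : Real.sin (μ/2 * T / 2) ≠ 0) {t s : ℝ} (h : s ≤ t) :
    |planktonG μ σ T t s 0 0| =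
      (2*|Real.sin (μ/2*T/2)|)⁻¹ * |Real.sin (μ/2*T/2 - μ/2*(t-s))| ∧
    |planktonG μ σ T t s 1 1| =
      (2*|Real.sin (μ/2*T/2)|)⁻¹ * |Real.sin (μ/2*T/2 - μ/2*(t-s))| ∧
    |planktonG μ σ T t s 0 1| =
      (2*|Real.sin (μ/2*T/2)|)⁻¹ * ((σ/(4*(μ/2))) * |Real.cos (μ/2*T/2 - μ/2*(t-s))|) ∧
    |planktonG μ σ T t s 1 0| =
      (2*|Real.sin (μ/2*T/2)|)⁻¹ * ((4*(μ/2)/σ) * |Real.cos (μ/2*T/2 - μ/2*(t-s))|) := by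
  rw [planktonG_eq_le μ σ T hμ.ne' hσ.ne' hsin h]
  have hinv : |(2 * Real.sin (μ/2*T/2))⁻¹| = (2 * |Real.sin (μ/2*T/2)|)⁻¹ := by
    rw [abs_inv, abs_mul]; norm_num
  have h1 : |σ/(4*(μ/2))| = σ/(4*(μ/2)) := abs_of_pos (by positivity)
  have h2 : |4*(μ/2)/σ| = 4*(μ/2)/σ := abs_of_pos (by positivity)
  refine ⟨?_, ?_, ?_, ?_⟩ <;>
    · norm_num [abs_mul, hinv, h1, h2, abs_inv]

lemma absG_gt (μ σ T : ℝ) (hμ : 0 < μ) (hσ : 0 < σ)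
    (hsin : Real.sin (μ/2 * T / 2) ≠ 0) {t s : ℝ} (h : ¬ s ≤ t) :
    |planktonG μ σ T t s 0 0| =
      (2*|Real.sin (μ/2*T/2)|)⁻¹ * |Real.sin (μ/2*T/2 - μ/2*(T+(t-s)))| ∧
    |planktonG μ σ T t s 1 1| =
      (2*|Real.sin (μ/2*T/2)|)⁻¹ * |Real.sin (μ/2*T/2 - μ/2*(T+(t-s)))| ∧
    |planktonG μ σ T t s 0 1| =
      (2*|Real.sin (μ/2*T/2)|)⁻¹ * ((σ/(4*(μ/2))) * |Real.cos (μ/2*T/2 - μ/2*(T+(t-s)))|) ∧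
    |planktonG μ σ T t s 1 0| =
      (2*|Real.sin (μ/2*T/2)|)⁻¹ * ((4*(μ/2)/σ) * |Real.cos (μ/2*T/2 - μ/2*(T+(t-s)))|) := by
  rw [planktonG_eq_gt μ σ T hμ.ne' hσ.ne' hsin h]
  have hinv : |(2 * Real.sin (μ/2*T/2))⁻¹| = (2 * |Real.sin (μ/2*T/2)|)⁻¹ := by
    rw [abs_inv, abs_mul]; norm_num
  have h1 : |σ/(4*(μ/2))| = σ/(4*(μ/2)) := abs_of_pos (by positivity)
  have h2 : |4*(μ/2)/σ| = 4*(μ/2)/σ := abs_of_pos (by positivity)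
  refine ⟨?_, ?_, ?_, ?_⟩ <;>
    · norm_num [abs_mul, hinv, h1, h2, abs_inv]


set_option maxHeartbeats 2000000 in
/-- For every t ∈ [0, T] the integrals over [0, T] of the absolute values of the
entries of the Green's matrix are independent of t and are given explicitly:
∫₀ᵀ |G₁₁| = ∫₀ᵀ |G₂₂| = (1/(ω|sin(ωT/2)|)) ∫₀^{ωT/2} |sin u| du,
∫₀ᵀ |G₁₂| = (σ/(4ω²|sin(ωT/2)|)) ∫₀^{ωT/2} |cos u| du, and
∫₀ᵀ |G₂₁| = (4/(σ|sin(ωT/2)|)) ∫₀^{ωT/2} |cos u| du. -/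
theorem green_matrix_entry_integrals (μ σ T : ℝ) (hμ : 0 < μ) (hσ : 0 < σ) (hT : 0 < T)
    (ω : ℝ) (hω : ω = μ / 2) (hsin : Real.sin (ω * T / 2) ≠ 0) :
    ∀ t ∈ Set.Icc (0 : ℝ) T,
      (∫ s in (0 : ℝ)..T, |planktonG μ σ T t s 0 0|) =
        (1 / (ω * |Real.sin (ω * T / 2)|)) * ∫ u in (0 : ℝ)..(ω * T / 2), |Real.sin u| ∧
      (∫ s in (0 : ℝ)..T, |planktonG μ σ T t s 1 1|) =
        (1 / (ω * |Real.sin (ω * T / 2)|)) * ∫ u in (0 : ℝ)..(ω * T / 2), |Real.sin u| ∧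
      (∫ s in (0 : ℝ)..T, |planktonG μ σ T t s 0 1|) =
        (σ / (4 * ω ^ 2 * |Real.sin (ω * T / 2)|)) *
          ∫ u in (0 : ℝ)..(ω * T / 2), |Real.cos u| ∧
      (∫ s in (0 : ℝ)..T, |planktonG μ σ T t s 1 0|) =
        (4 / (σ * |Real.sin (ω * T / 2)|)) *
          ∫ u in (0 : ℝ)..(ω * T / 2), |Real.cos u| := by
  subst hω
  intro t ht
  have hμ' : μ ≠ 0 := hμ.ne'
  have hσ' : σ ≠ 0 := hσ.ne'
  have hω2 : (0:ℝ) < μ / 2 := by linarith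
  have habs : |Real.sin (μ/2*T/2)| ≠ 0 := abs_ne_zero.mpr hsin
  have habs' : (0:ℝ) < |Real.sin (μ/2*T/2)| := abs_pos.mpr hsin
  refine ⟨?_, ?_, ?_, ?_⟩
  · have key := master (μ/2) T t hω2 ht.1 ht.2 (fun u => |Real.sin u|)
      (fun s => (2 * |Real.sin (μ/2*T/2)|) * |planktonG μ σ T t s 0 0|) (by fun_prop)
      (fun x => by simp)
      (fun s hs => by
        rw [(absG_le μ σ T hμ hσ hsin hs.2).1,
          show μ/2*T/2 - μ/2*(t-s) = μ/2*s + (μ/2*T/2 - μ/2*t) by ring]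
        rw [← mul_assoc, mul_inv_cancel₀ (mul_ne_zero two_ne_zero habs), one_mul])
      (fun s hs => by
        rw [(absG_gt μ σ T hμ hσ hsin (not_le.mpr hs.1)).1,
          show μ/2*T/2 - μ/2*(T+(t-s)) = -(-(μ/2)*s + (μ/2*t + μ/2*T/2)) by ring,
          Real.sin_neg, abs_neg]
        rw [← mul_assoc, mul_inv_cancel₀ (mul_ne_zero two_ne_zero habs), one_mul])
    rw [intervalIntegral.integral_const_mul] at key
    rw [← mul_right_inj' (mul_ne_zero two_ne_zero habs), key, ← mul_assoc,
      show 2*|Real.sin (μ/2*T/2)| * (1/(μ/2*|Real.sin (μ/2*T/2)|)) = 2/(μ/2) by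
        rw [mul_one_div, mul_div_mul_comm, div_self habs, mul_one]]
  · have key := master (μ/2) T t hω2 ht.1 ht.2 (fun u => |Real.sin u|)
      (fun s => (2 * |Real.sin (μ/2*T/2)|) * |planktonG μ σ T t s 1 1|) (by fun_prop)
      (fun x => by simp)
      (fun s hs => by
        rw [(absG_le μ σ T hμ hσ hsin hs.2).2.1,
          show μ/2*T/2 - μ/2*(t-s) = μ/2*s + (μ/2*T/2 - μ/2*t) by ring]
        rw [← mul_assoc, mul_inv_cancel₀ (mul_ne_zero two_ne_zero habs), one_mul])
      (fun s hs => by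
        rw [(absG_gt μ σ T hμ hσ hsin (not_le.mpr hs.1)).2.1,
          show μ/2*T/2 - μ/2*(T+(t-s)) = -(-(μ/2)*s + (μ/2*t + μ/2*T/2)) by ring,
          Real.sin_neg, abs_neg]
        rw [← mul_assoc, mul_inv_cancel₀ (mul_ne_zero two_ne_zero habs), one_mul])
    rw [intervalIntegral.integral_const_mul] at key
    rw [← mul_right_inj' (mul_ne_zero two_ne_zero habs), key, ← mul_assoc,
      show 2*|Real.sin (μ/2*T/2)| * (1/(μ/2*|Real.sin (μ/2*T/2)|)) = 2/(μ/2) by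
        rw [mul_one_div, mul_div_mul_comm, div_self habs, mul_one]]
  · have key := master (μ/2) T t hω2 ht.1 ht.2 (fun u => |Real.cos u|)
      (fun s => (2 * |Real.sin (μ/2*T/2)|) * ((4*(μ/2)/σ) * |planktonG μ σ T t s 0 1|))
      (by fun_prop) (fun x => by simp)
      (fun s hs => by
        rw [(absG_le μ σ T hμ hσ hsin hs.2).2.2.1,
          show μ/2*T/2 - μ/2*(t-s) = μ/2*s + (μ/2*T/2 - μ/2*t) by ring]
        exact cancel_aux _ _ _ _ (mul_ne_zero two_ne_zero habs) (by field_simp; try ring))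
      (fun s hs => by
        rw [(absG_gt μ σ T hμ hσ hsin (not_le.mpr hs.1)).2.2.1,
          show μ/2*T/2 - μ/2*(T+(t-s)) = -(-(μ/2)*s + (μ/2*t + μ/2*T/2)) by ring,
          Real.cos_neg]
        exact cancel_aux _ _ _ _ (mul_ne_zero two_ne_zero habs) (by field_simp; try ring))
    rw [intervalIntegral.integral_const_mul, intervalIntegral.integral_const_mul] at key
    rw [← mul_right_inj' (mul_ne_zero (mul_ne_zero two_ne_zero habs)
        (show (4*(μ/2)/σ) ≠ 0 by positivity)), ← mul_assoc, mul_assoc, key,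
      const_aux1 (μ/2) σ (|Real.sin (μ/2*T/2)|) hω2.ne' hσ' habs]
  · have key := master (μ/2) T t hω2 ht.1 ht.2 (fun u => |Real.cos u|)
      (fun s => (2 * |Real.sin (μ/2*T/2)|) * ((σ/(4*(μ/2))) * |planktonG μ σ T t s 1 0|))
      (by fun_prop) (fun x => by simp)
      (fun s hs => by
        rw [(absG_le μ σ T hμ hσ hsin hs.2).2.2.2,
          show μ/2*T/2 - μ/2*(t-s) = μ/2*s + (μ/2*T/2 - μ/2*t) by ring]
        exact cancel_aux _ _ _ _ (mul_ne_zero two_ne_zero habs) (by field_simp; try ring))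
      (fun s hs => by
        rw [(absG_gt μ σ T hμ hσ hsin (not_le.mpr hs.1)).2.2.2,
          show μ/2*T/2 - μ/2*(T+(t-s)) = -(-(μ/2)*s + (μ/2*t + μ/2*T/2)) by ring,
          Real.cos_neg]
        exact cancel_aux _ _ _ _ (mul_ne_zero two_ne_zero habs) (by field_simp; try ring))
    rw [intervalIntegral.integral_const_mul, intervalIntegral.integral_const_mul] at key
    rw [← mul_right_inj' (mul_ne_zero (mul_ne_zero two_ne_zero habs)
        (show (σ/(4*(μ/2))) ≠ 0 by positivity)), ← mul_assoc, mul_assoc, key,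
      const_aux2 (μ/2) σ (|Real.sin (μ/2*T/2)|) hω2.ne' hσ' habs]
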